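/- Let (W,S) be a Coxeter system, I, J ⊆ S, and u ∈ W. Then the double coset W_I u W_J has a unique element of minimal length v₀ and a unique element of maximal length v₁ (when W_I u W_J is finite), and W_I u W_J equals the Bruhat interval [v₀, v₁]. -/

import Mathlib

open CoxeterSystem List

open scoped Classical

variable {B W : Type*} [Group W] {M : CoxeterMatrix B}

namespace CoxeterBruhat

/-- One edge in the Bruhat graph: `v = t * u` for a reflection `t`, with `ℓ(u) < ℓ(v)`. -/
def Step (cs : CoxeterSystem M W) (u v : W) : Prop :=
  ∃ t : W, cs.IsReflection t ∧ v = t * u ∧ cs.length u < cs.length v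

/-- The Bruhat order, as the reflexive-transitive closure of `Step`. -/
def BruhatLE (cs : CoxeterSystem M W) : W → W → Prop :=
  Relation.ReflTransGen (Step cs)

/-- The standard parabolic subgroup generated by the simple reflections indexed by `I`. -/
def parabolic (cs : CoxeterSystem M W) (I : Set B) : Subgroup W :=
  Subgroup.closure (cs.simple '' I)

/-- The left descent set `D_L(w)`. -/
def leftDescents (cs : CoxeterSystem M W) (w : W) : Set B :=
  {i | cs.IsLeftDescent w i}

/-- The right descent set `D_R(w)`. -/
def rightDescents (cs : CoxeterSystem M W) (w : W) : Set B :=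
  {i | cs.IsRightDescent w i}

/-- The double coset `W_I u W_J` as a set. -/
def doubleCoset (cs : CoxeterSystem M W) (I J : Set B) (u : W) : Set W :=
  {v | ∃ x ∈ parabolic cs I, ∃ y ∈ parabolic cs J, v = x * u * y}

/-- The Bruhat coset `C_w(u) = W_{D_L(w)} u W_{D_R(w)}`. -/
def bCoset (cs : CoxeterSystem M W) (w u : W) : Set W :=
  doubleCoset cs (leftDescents cs w) (rightDescents cs w) u

/-- The lower Bruhat interval `B(w) = [e, w]`. -/
def lowerInterval (cs : CoxeterSystem M W) (w : W) : Set W :=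
  {v | BruhatLE cs v w}

/-- The support `S(v)` of `v`: simple reflections below `v` in Bruhat order. -/
def support (cs : CoxeterSystem M W) (v : W) : Set B :=
  {i | BruhatLE cs (cs.simple i) v}

variable (cs : CoxeterSystem M W)

/-- The sign representation on `W × ℤˣ`. -/
noncomputable def refSigma (i : B) : Equiv.Perm (W × ℤˣ) :=
  Function.Involutive.toPerm
    (fun p => (cs.simple i * p.1 * cs.simple i, if p.1 = cs.simple i then -p.2 else p.2))
    (by
      rintro ⟨t, ε⟩
      have h1 : cs.simple i * (cs.simple i * t * cs.simple i) * cs.simple i = t := by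
        rw [← mul_assoc, ← mul_assoc, simple_mul_simple_self, one_mul,
          simple_mul_simple_cancel_right]
      have h2 : (cs.simple i * t * cs.simple i = cs.simple i) ↔ t = cs.simple i := by
        constructor
        · intro h
          have := congrArg (fun x => cs.simple i * x * cs.simple i) h
          simpa [h1, simple_mul_simple_cancel_left, simple_mul_simple_cancel_right] using this
        · rintro rfl
          rw [simple_mul_simple_self, one_mul]
      simp only [h1, h2]
      by_cases h : t = cs.simple i <;> simp [h])

@[simp] lemma refSigma_apply (i : B) (t : W) (ε : ℤˣ) :
    refSigma cs i (t, ε) =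
      (cs.simple i * t * cs.simple i, if t = cs.simple i then -ε else ε) := rfl

/-- The product of the `refSigma`s along a word. -/
noncomputable def wordSigma (ω : List B) : Equiv.Perm (W × ℤˣ) := (ω.map (refSigma cs)).prod

lemma wordSigma_cons (i : B) (ω : List B) :
    wordSigma cs (i :: ω) = refSigma cs i * wordSigma cs ω := by
  simp [wordSigma]

lemma wordSigma_apply (ω : List B) (t : W) (ε : ℤˣ) :
    wordSigma cs ω (t, ε) = (cs.wordProd ω * t * (cs.wordProd ω)⁻¹,
      (-1 : ℤˣ) ^ ((cs.rightInvSeq ω).count t) * ε) := by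
  induction ω generalizing t ε with
  | nil => simp [wordSigma]
  | cons i ω ih =>
    rw [wordSigma_cons]
    have hw : cs.wordProd (i :: ω) = cs.simple i * cs.wordProd ω := cs.wordProd_cons i ω
    have hr : cs.rightInvSeq (i :: ω) =
        ((cs.wordProd ω)⁻¹ * cs.simple i * cs.wordProd ω) :: cs.rightInvSeq ω := rfl
    rw [hr, hw]
    have := ih t ε
    simp only [Equiv.Perm.mul_apply, this, refSigma_apply]
    have hcond : (cs.wordProd ω * t * (cs.wordProd ω)⁻¹ = cs.simple i)
        ↔ (t = (cs.wordProd ω)⁻¹ * cs.simple i * cs.wordProd ω) := by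
      constructor
      · intro h; rw [← h]; group
      · intro h; rw [h]; group
    refine Prod.ext ?_ ?_
    · show cs.simple i * (cs.wordProd ω * t * (cs.wordProd ω)⁻¹) * cs.simple i = _
      show _ = cs.simple i * cs.wordProd ω * t * (cs.simple i * cs.wordProd ω)⁻¹
      rw [mul_inv_rev, cs.inv_simple]
      group
    · show (if cs.wordProd ω * t * (cs.wordProd ω)⁻¹ = cs.simple i then
        -((-1 : ℤˣ) ^ ((cs.rightInvSeq ω).count t) * ε)
        else (-1 : ℤˣ) ^ ((cs.rightInvSeq ω).count t) * ε) = _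
      show _ = (-1 : ℤˣ) ^ (((cs.wordProd ω)⁻¹ * cs.simple i * cs.wordProd ω ::
        cs.rightInvSeq ω).count t) * ε
      rw [List.count_cons]
      by_cases h : t = (cs.wordProd ω)⁻¹ * cs.simple i * cs.wordProd ω
      · rw [if_pos (hcond.mpr h)]
        have hb : ((cs.wordProd ω)⁻¹ * cs.simple i * cs.wordProd ω == t) = true := by
          simpa using h.symm
        rw [hb, if_pos rfl, pow_succ]
        rw [mul_assoc, mul_comm (-1 : ℤˣ) ε]
        simp
      · rw [if_neg (fun hc => h (hcond.mp hc))]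
        have hb : ((cs.wordProd ω)⁻¹ * cs.simple i * cs.wordProd ω == t) = false := by
          simpa using fun hc => h hc.symm
        rw [hb]
        simp







lemma semiconj_pow {a b : W} (ha : a * a = 1) (hb : b * b = 1) (k : ℕ) :
    b * (a * b) ^ k = ((a * b) ^ k)⁻¹ * b := by
  have hainv : a⁻¹ = a := by rw [inv_eq_iff_mul_eq_one, ha]
  have hbinv : b⁻¹ = b := by rw [inv_eq_iff_mul_eq_one, hb]
  have h1 : SemiconjBy b (a * b) ((a * b)⁻¹) := by
    show b * (a * b) = (a * b)⁻¹ * b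
    rw [mul_inv_rev, hainv, hbinv, mul_assoc]
  have := h1.pow_right k
  rwa [inv_pow] at this

lemma rho_eq (i i' : B) (n : ℕ) :
    (cs.wordProd (alternatingWord i i' n))⁻¹ * cs.simple (if Even n then i' else i) *
      cs.wordProd (alternatingWord i i' n)
      = (cs.simple i' * cs.simple i) ^ n * cs.simple i' := by
  set a := cs.simple i with ha'
  set b := cs.simple i' with hb'
  have haa : a * a = 1 := cs.simple_mul_simple_self i
  have hbb : b * b = 1 := cs.simple_mul_simple_self i'
  have hainv : a⁻¹ = a := by rw [inv_eq_iff_mul_eq_one, haa]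
  have hbinv : b⁻¹ = b := by rw [inv_eq_iff_mul_eq_one, hbb]
  have hba : (b * a) ^ n = ((a * b) ^ n)⁻¹ := by
    rw [← inv_pow, mul_inv_rev, hainv, hbinv]
  rw [cs.prod_alternatingWord_eq_mul_pow i i' n, hba]
  rcases Nat.even_or_odd n with hn | hn
  · rw [if_pos hn, if_pos hn, one_mul]
    have h2 : n / 2 + n / 2 = n := by
      have := hn
      rw [Nat.even_iff] at this
      omega
    calc ((a * b) ^ (n / 2))⁻¹ * b * (a * b) ^ (n / 2)
        = ((a * b) ^ (n / 2))⁻¹ * (b * (a * b) ^ (n / 2)) := by rw [mul_assoc]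
      _ = ((a * b) ^ (n / 2))⁻¹ * (((a * b) ^ (n / 2))⁻¹ * b) := by rw [semiconj_pow haa hbb]
      _ = ((a * b) ^ (n / 2) * (a * b) ^ (n / 2))⁻¹ * b := by rw [mul_inv_rev]; group
      _ = ((a * b) ^ n)⁻¹ * b := by rw [← pow_add, h2]
  · have hne : ¬ Even n := Nat.not_even_iff_odd.mpr hn
    rw [if_neg hne, if_neg hne]
    have h2 : n / 2 + (n / 2 + 1) = n := by
      have := hn
      rw [Nat.odd_iff] at this
      omega
    calc (b * (a * b) ^ (n / 2))⁻¹ * a * (b * (a * b) ^ (n / 2))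
        = ((a * b) ^ (n / 2))⁻¹ * (b * ((a * b) ^ (n / 2 + 1))) := by
          rw [mul_inv_rev, hbinv, pow_succ']
          simp [mul_assoc]
      _ = ((a * b) ^ (n / 2))⁻¹ * (((a * b) ^ (n / 2 + 1))⁻¹ * b) := by
          rw [semiconj_pow haa hbb]
      _ = ((a * b) ^ (n / 2 + 1) * (a * b) ^ (n / 2))⁻¹ * b := by rw [mul_inv_rev]; group
      _ = ((a * b) ^ n)⁻¹ * b := by rw [← pow_add, Nat.add_comm (n/2 + 1), h2]

/-- closed form of the right inversion sequence of an alternating word -/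
lemma rightInvSeq_alternatingWord (i i' : B) (n : ℕ) :
    cs.rightInvSeq (alternatingWord i i' n)
      = (List.range n).reverse.map
          (fun k => (cs.simple i' * cs.simple i) ^ k * cs.simple i') := by
  induction n with
  | zero => simp [alternatingWord]
  | succ n ih =>
    rw [alternatingWord_succ' i i' n]
    have : cs.rightInvSeq ((if Even n then i' else i) :: alternatingWord i i' n)
        = ((cs.wordProd (alternatingWord i i' n))⁻¹ * cs.simple (if Even n then i' else i) *
            cs.wordProd (alternatingWord i i' n)) :: cs.rightInvSeq (alternatingWord i i' n) := by
      rfl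
    rw [this, rho_eq, ih, List.range_succ, List.reverse_append]
    rfl

lemma count_rightInvSeq_alternatingWord_even (i i' : B) (t : W) :
    Even ((cs.rightInvSeq (alternatingWord i i' (2 * M i i'))).count t) := by
  rw [rightInvSeq_alternatingWord, List.map_reverse, List.count_reverse]
  have h2 : 2 * M i i' = M i i' + M i i' := by omega
  rw [h2, List.range_add, List.map_append, List.count_append]
  have : (List.map (fun x => M i i' + x) (List.range (M i i'))).map
      (fun k => (cs.simple i' * cs.simple i) ^ k * cs.simple i')
      = (List.range (M i i')).map
          (fun k => (cs.simple i' * cs.simple i) ^ k * cs.simple i') := by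
    rw [List.map_map]
    apply List.map_congr_left
    intro k _
    show (cs.simple i' * cs.simple i) ^ (M i i' + k) * cs.simple i' = _
    rw [pow_add, cs.simple_mul_simple_pow' i i', one_mul]
  rw [this]
  exact Even.add_self _

/-- liftability of the sign representation -/
lemma refSigma_liftable : M.IsLiftable (fun i => refSigma cs i) := by
  intro i i'
  have key : ∀ m : ℕ, ((alternatingWord i i' (2 * m)).map (fun j => refSigma cs j)).prod
      = (refSigma cs i * refSigma cs i') ^ m := by
    intro m
    induction m with
    | zero => simp [alternatingWord]
    | succ m ih =>
      have : 2 * (m + 1) = (2 * m) + 1 + 1 := by omega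
      rw [this, alternatingWord_succ' i i' (2*m+1), alternatingWord_succ' i i' (2*m)]
      have he1 : ¬ Even (2*m+1) := by simp [Nat.even_add_one]
      have he2 : Even (2*m) := even_two_mul m
      rw [if_neg he1, if_pos he2]
      rw [List.map_cons, List.map_cons, List.prod_cons, List.prod_cons, ih, pow_succ']
      rw [mul_assoc]
  have h1 : ((alternatingWord i i' (2 * M i i')).map (fun j => refSigma cs j)).prod = 1 := by
    show wordSigma cs (alternatingWord i i' (2 * M i i')) = 1
    have hπ : cs.wordProd (alternatingWord i i' (2 * M i i')) = 1 := by
      rw [cs.prod_alternatingWord_eq_mul_pow]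
      rw [if_pos (even_two_mul _)]
      rw [one_mul]
      have : 2 * M i i' / 2 = M i i' := by omega
      rw [this, cs.simple_mul_simple_pow]
    apply Equiv.ext
    rintro ⟨t, ε⟩
    rw [wordSigma_apply, hπ]
    have hev := (count_rightInvSeq_alternatingWord_even cs i i' t).neg_one_pow (α := ℤˣ)
    rw [hev, one_mul]
    simp
  rw [key] at h1
  simpa using h1

/-- The homomorphism `W →* Perm (W × ℤˣ)`. -/
noncomputable def phi : W →* Equiv.Perm (W × ℤˣ) :=
  cs.lift ⟨fun i => refSigma cs i, refSigma_liftable cs⟩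

lemma phi_simple (i : B) : phi cs (cs.simple i) = refSigma cs i :=
  cs.lift_apply_simple (refSigma_liftable cs) i

lemma phi_wordProd (ω : List B) : phi cs (cs.wordProd ω) = wordSigma cs ω := by
  induction ω with
  | nil => simp [wordSigma]
  | cons i ω ih =>
    rw [cs.wordProd_cons, map_mul, phi_simple, ih, wordSigma_cons]

/-- The sign `η(w, t)`. -/
noncomputable def nu (w t : W) : ℤˣ := (phi cs w (t, 1)).2

lemma nu_eq_count {w : W} {ω : List B} (hω : cs.wordProd ω = w) (t : W) :
    nu cs w t = (-1 : ℤˣ) ^ ((cs.rightInvSeq ω).count t) := by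
  rw [nu, ← hω, phi_wordProd, wordSigma_apply]
  simp

lemma phi_apply (w t : W) (ε : ℤˣ) :
    phi cs w (t, ε) = (w * t * w⁻¹, nu cs w t * ε) := by
  rcases cs.wordProd_surjective w with ⟨ω, rfl⟩
  rw [phi_wordProd, wordSigma_apply, nu_eq_count cs rfl]


section chunk3

lemma nu_one (t : W) : nu cs 1 t = 1 := by
  have := nu_eq_count cs (cs.wordProd_nil) t
  simpa using this

lemma nu_mul (u v t : W) : nu cs (u * v) t = nu cs u (v * t * v⁻¹) * nu cs v t := by
  have h : phi cs (u * v) (t, 1) = (u * v * t * (u * v)⁻¹, nu cs u (v * t * v⁻¹) * nu cs v t) := by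
    rw [map_mul, Equiv.Perm.mul_apply, phi_apply cs v t 1, mul_one,
      phi_apply cs u (v * t * v⁻¹) (nu cs v t)]
    congr 1
    group
  have h2 := phi_apply cs (u * v) t 1
  rw [h] at h2
  have h3 := congrArg Prod.snd h2
  simp only at h3
  rw [mul_one] at h3
  exact h3.symm

lemma nu_simple (i : B) (t : W) :
    nu cs (cs.simple i) t = if t = cs.simple i then -1 else 1 := by
  have hw : cs.wordProd [i] = cs.simple i := cs.wordProd_singleton i
  rw [nu_eq_count cs hw t]
  have : cs.rightInvSeq [i] = [cs.simple i] := cs.rightInvSeq_singleton i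
  rw [this]
  by_cases h : t = cs.simple i
  · subst h
    simp
  · rw [if_neg h]
    have : List.count t [cs.simple i] = 0 := by
      simp [List.count_singleton]
      exact fun hc => h hc.symm
    rw [this, pow_zero]

lemma nu_mul_nu_inv (w t : W) : nu cs w (w⁻¹ * t * w) * nu cs w⁻¹ t = 1 := by
  have h := nu_mul cs w w⁻¹ t
  rw [mul_inv_cancel, nu_one, inv_inv] at h
  exact h.symm

lemma nu_self_eq_neg_one {t : W} (ht : cs.IsReflection t) : nu cs t t = -1 := by
  obtain ⟨w, i, ht'⟩ := ht
  have key : t = w * (cs.simple i * w⁻¹) := by rw [ht']; group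
  have h1 : (cs.simple i * w⁻¹) * t * (cs.simple i * w⁻¹)⁻¹ = cs.simple i := by
    rw [ht', mul_inv_rev, inv_inv, cs.inv_simple]
    simp [mul_assoc, cs.simple_mul_simple_cancel_left]
  have h3 : w⁻¹ * t * w = cs.simple i := by
    rw [ht']; simp [mul_assoc]
  have h2 : nu cs (cs.simple i * w⁻¹) t
      = nu cs (cs.simple i) (w⁻¹ * t * w) * nu cs w⁻¹ t := by
    rw [nu_mul]
    congr 2
    rw [inv_inv]
  have h4 := nu_mul_nu_inv cs w t
  rw [h3] at h4
  calc nu cs t t = nu cs (w * (cs.simple i * w⁻¹)) t := by rw [← key]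
    _ = nu cs w ((cs.simple i * w⁻¹) * t * (cs.simple i * w⁻¹)⁻¹)
          * nu cs (cs.simple i * w⁻¹) t := nu_mul cs w _ t
    _ = nu cs w (cs.simple i) * (nu cs (cs.simple i) (w⁻¹ * t * w) * nu cs w⁻¹ t) := by
          rw [h1, h2]
    _ = nu cs w (cs.simple i) * ((-1) * nu cs w⁻¹ t) := by rw [h3, nu_simple, if_pos rfl]
    _ = -(nu cs w (cs.simple i) * nu cs w⁻¹ t) := by rw [neg_one_mul, mul_neg]
    _ = -1 := by rw [h4]

lemma odd_count_of_nu_neg_one {w t : W} {ω : List B} (hω : cs.wordProd ω = w)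
    (h : nu cs w t = -1) : Odd ((cs.rightInvSeq ω).count t) := by
  rcases Nat.even_or_odd ((cs.rightInvSeq ω).count t) with he | ho
  · exfalso
    rw [nu_eq_count cs hω, he.neg_one_pow] at h
    exact (by decide : (1 : ℤˣ) ≠ -1) h
  · exact ho

lemma isRightInversion_iff_nu {w t : W} (ht : cs.IsReflection t) :
    cs.IsRightInversion w t ↔ nu cs w t = -1 := by
  constructor
  · intro hri
    rcases Int.units_eq_one_or (nu cs w t) with h1 | h1
    · exfalso
      have hwt : nu cs (w * t) t = -1 := by
        have : t * t * t⁻¹ = t := by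
          rw [ht.mul_self, one_mul, ht.inv]
        rw [nu_mul, this, h1, one_mul, nu_self_eq_neg_one cs ht]
      -- then ℓ (w * t * t) < ℓ (w * t), i.e. ℓ w < ℓ (w * t)
      obtain ⟨ω, hred, hw⟩ := cs.exists_reduced_word' (w * t)
      have hodd := odd_count_of_nu_neg_one cs hw.symm hwt
      have hmem : t ∈ cs.rightInvSeq ω := by
        rw [← List.count_pos_iff]
        rcases hodd with ⟨c, hc⟩
        omega
      have := cs.isRightInversion_of_mem_rightInvSeq hred hmem
      rw [← hw] at this
      have h2 : cs.length (w * t * t) < cs.length (w * t) := this.2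
      rw [mul_assoc, ht.mul_self, mul_one] at h2
      exact Nat.lt_asymm hri.2 h2
    · exact h1
  · intro h
    obtain ⟨ω, hred, hw⟩ := cs.exists_reduced_word' w
    have hodd := odd_count_of_nu_neg_one cs hw.symm h
    have hmem : t ∈ cs.rightInvSeq ω := by
      rw [← List.count_pos_iff]
      rcases hodd with ⟨c, hc⟩
      omega
    have := cs.isRightInversion_of_mem_rightInvSeq hred hmem
    rwa [← hw] at this

/-- Strong exchange, right version. -/
lemma exists_eraseIdx_right {w t : W} (ht : cs.IsReflection t)
    (hlt : cs.length (w * t) < cs.length w) {ω : List B} (hω : cs.wordProd ω = w) :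
    ∃ j < ω.length, cs.wordProd (ω.eraseIdx j) = w * t := by
  have hnu : nu cs w t = -1 := (isRightInversion_iff_nu cs ht).mp ⟨ht, hlt⟩
  have hodd := odd_count_of_nu_neg_one cs hω hnu
  have hmem : t ∈ cs.rightInvSeq ω := by
    rw [← List.count_pos_iff]
    rcases hodd with ⟨c, hc⟩
    omega
  obtain ⟨j, hj, hjt⟩ := List.getElem_of_mem hmem
  rw [cs.length_rightInvSeq] at hj
  refine ⟨j, hj, ?_⟩
  have hgetD : (cs.rightInvSeq ω).getD j 1 = t := by
    rw [List.getD_eq_getElem?_getD, List.getElem?_eq_getElem (by rwa [cs.length_rightInvSeq])]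
    simpa using hjt
  rw [← cs.wordProd_mul_getD_rightInvSeq, hgetD, hω]

/-- Strong exchange, left version. -/
lemma exists_eraseIdx_left {w t : W} (ht : cs.IsReflection t)
    (hlt : cs.length (t * w) < cs.length w) {ω : List B} (hω : cs.wordProd ω = w) :
    ∃ j < ω.length, cs.wordProd (ω.eraseIdx j) = t * w := by
  have hlis : cs.leftInvSeq ω = (cs.rightInvSeq ω.reverse).reverse := by
    have := cs.leftInvSeq_reverse ω.reverse
    rwa [List.reverse_reverse] at this
  have hπrev : cs.wordProd ω.reverse = w⁻¹ := by rw [cs.wordProd_reverse, hω]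
  have hinv : cs.length (w⁻¹ * t) < cs.length w⁻¹ := by
    have h1 : w⁻¹ * t = (t * w)⁻¹ := by rw [mul_inv_rev, ht.inv]
    rw [h1, cs.length_inv, cs.length_inv]
    exact hlt
  have hnu : nu cs w⁻¹ t = -1 := (isRightInversion_iff_nu cs ht).mp ⟨ht, hinv⟩
  have hodd := odd_count_of_nu_neg_one cs hπrev hnu
  have hmem : t ∈ cs.leftInvSeq ω := by
    rw [hlis, List.mem_reverse, ← List.count_pos_iff]
    rcases hodd with ⟨c, hc⟩
    omega
  obtain ⟨j, hj, hjt⟩ := List.getElem_of_mem hmem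
  rw [cs.length_leftInvSeq] at hj
  refine ⟨j, hj, ?_⟩
  have hgetD : (cs.leftInvSeq ω).getD j 1 = t := by
    rw [List.getD_eq_getElem?_getD, List.getElem?_eq_getElem (by rwa [cs.length_leftInvSeq])]
    simpa using hjt
  rw [← cs.getD_leftInvSeq_mul_wordProd, hgetD, hω]

end chunk3
section chunk4

lemma bruhatLE_refl (w : W) : BruhatLE cs w w := Relation.ReflTransGen.refl

lemma bruhatLE_trans {u v w : W} (h1 : BruhatLE cs u v) (h2 : BruhatLE cs v w) :
    BruhatLE cs u w := Relation.ReflTransGen.trans h1 h2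

lemma length_le_of_bruhatLE {u v : W} (h : BruhatLE cs u v) : cs.length u ≤ cs.length v := by
  induction h with
  | refl => exact le_rfl
  | tail h1 h2 ih =>
    obtain ⟨t, ht, rfl, hl⟩ := h2
    omega

lemma eq_of_bruhatLE_of_length_ge {u v : W} (h : BruhatLE cs u v)
    (h2 : cs.length v ≤ cs.length u) : u = v := by
  rcases Relation.ReflTransGen.cases_tail h with heq | ⟨c, hc, hstep⟩
  · exact heq.symm
  · exfalso
    obtain ⟨t, ht, rfl, hl⟩ := hstep
    have := length_le_of_bruhatLE cs hc
    omega

lemma step_of_right_reflection {u v t : W} (ht : cs.IsReflection t) (hv : v = u * t)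
    (hl : cs.length u < cs.length v) : Step cs u v := by
  refine ⟨u * t * u⁻¹, ht.conj u, ?_, hl⟩
  rw [hv]; group

lemma step_right_form {u v : W} (h : Step cs u v) :
    ∃ t : W, cs.IsReflection t ∧ v = u * t ∧ cs.length u < cs.length v := by
  obtain ⟨t, ht, rfl, hl⟩ := h
  refine ⟨u⁻¹ * t * u, ?_, by group, hl⟩
  have := ht.conj u⁻¹
  rwa [inv_inv] at this

lemma bruhatLE_inv {u v : W} (h : BruhatLE cs u v) : BruhatLE cs u⁻¹ v⁻¹ := by
  induction h with
  | refl => exact bruhatLE_refl cs _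
  | tail h1 hstep ih =>
    rename_i b c
    refine Relation.ReflTransGen.tail ih ?_
    obtain ⟨t, ht, rfl, hl⟩ := hstep
    refine step_of_right_reflection cs ht (by rw [mul_inv_rev, ht.inv]) ?_
    rw [cs.length_inv, cs.length_inv]
    exact hl

lemma bruhatLE_of_bruhatLE_inv {u v : W} (h : BruhatLE cs u⁻¹ v⁻¹) : BruhatLE cs u v := by
  have := bruhatLE_inv cs h
  rwa [inv_inv, inv_inv] at this

lemma step_up_left {w : W} {i : B} (h : cs.length w < cs.length (cs.simple i * w)) :
    BruhatLE cs w (cs.simple i * w) :=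
  Relation.ReflTransGen.single ⟨cs.simple i, cs.isReflection_simple i, rfl, h⟩

lemma step_down_left {w : W} {i : B} (h : cs.length (cs.simple i * w) < cs.length w) :
    BruhatLE cs (cs.simple i * w) w :=
  Relation.ReflTransGen.single ⟨cs.simple i, cs.isReflection_simple i,
    (cs.simple_mul_simple_cancel_left i).symm, h⟩

lemma step_up_right {w : W} {j : B} (h : cs.length w < cs.length (w * cs.simple j)) :
    BruhatLE cs w (w * cs.simple j) :=
  Relation.ReflTransGen.single
    (step_of_right_reflection cs (cs.isReflection_simple j) rfl h)

lemma step_down_right {w : W} {j : B} (h : cs.length (w * cs.simple j) < cs.length w) :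
    BruhatLE cs (w * cs.simple j) w :=
  Relation.ReflTransGen.single
    (step_of_right_reflection cs (cs.isReflection_simple j)
      (by rw [mul_assoc, cs.simple_mul_simple_self, mul_one]) h)

lemma step_erase {b c : W} (hstep : Step cs b c) {ω : List B} (hω : cs.wordProd ω = c) :
    ∃ j < ω.length, cs.wordProd (ω.eraseIdx j) = b := by
  obtain ⟨t, ht, rfl, hl⟩ := hstep
  have hb : t * (t * b) = b := by rw [← mul_assoc, ht.mul_self, one_mul]
  have hlt : cs.length (t * (t * b)) < cs.length (t * b) := by rw [hb]; exact hl
  obtain ⟨j, hj, hj2⟩ := exists_eraseIdx_left cs ht hlt hω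
  exact ⟨j, hj, by rw [hj2, hb]⟩

/-- subword extraction along the Bruhat order (part of the subword property). -/
lemma exists_sublist_of_bruhatLE {u w : W} (h : BruhatLE cs u w) :
    ∀ ω : List B, cs.wordProd ω = w → ∃ ω', ω' <+ ω ∧ cs.wordProd ω' = u := by
  induction h with
  | refl => exact fun ω hω => ⟨ω, List.Sublist.refl ω, hω⟩
  | tail h1 hstep ih =>
    intro ω hω
    obtain ⟨j, hj, hj2⟩ := step_erase cs hstep hω
    obtain ⟨ω', hsub, hπ⟩ := ih (ω.eraseIdx j) hj2
    exact ⟨ω', hsub.trans (List.eraseIdx_sublist ω j), hπ⟩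

/-- Joint induction: exchange-type lemma (M) and subword property (B). -/
lemma M_and_B (n : ℕ) :
    (∀ w : W, cs.length w = n → ∀ u : W, ∀ i : B, BruhatLE cs u w →
       BruhatLE cs (cs.simple i * u) w ∨ BruhatLE cs (cs.simple i * u) (cs.simple i * w)) ∧
    (∀ ω : List B, cs.IsReduced ω → ω.length = n → ∀ ω' : List B, ω' <+ ω →
       BruhatLE cs (cs.wordProd ω') (cs.wordProd ω)) := by
  induction n using Nat.strong_induction_on with
  | _ n ih =>
  constructor
  · -- M
    intro w hw u i hle
    rcases Relation.ReflTransGen.cases_tail hle with heq | ⟨v, huv, hstep⟩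
    · right; rw [heq]; exact bruhatLE_refl cs _
    · obtain ⟨t, ht, hwt, hlv⟩ := hstep
      have hvn : cs.length v < n := by omega
      have hM := (ih (cs.length v) hvn).1 v rfl u i huv
      have hvw : BruhatLE cs v w := Relation.ReflTransGen.single ⟨t, ht, hwt, hlv⟩
      rcases hM with h1 | h1
      · exact Or.inl (bruhatLE_trans cs h1 hvw)
      · by_cases hsv : cs.length (cs.simple i * v) < cs.length v
        · exact Or.inl (bruhatLE_trans cs h1 (bruhatLE_trans cs (step_down_left cs hsv) hvw))
        · have hsv' : cs.length v < cs.length (cs.simple i * v) :=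
            lt_of_le_of_ne (le_of_not_gt hsv) (Ne.symm (cs.length_simple_mul_ne v i))
          -- reflection t' with s i * w = t' * (s i * v)
          have ht' : cs.IsReflection (cs.simple i * t * (cs.simple i)⁻¹) := ht.conj _
          have hkey : cs.simple i * w = (cs.simple i * t * (cs.simple i)⁻¹) * (cs.simple i * v) := by
            rw [hwt]; group
          by_cases hle2 : cs.length (cs.simple i * v) < cs.length (cs.simple i * w)
          · refine Or.inr (bruhatLE_trans cs h1 (Relation.ReflTransGen.single ?_))
            exact ⟨_, ht', hkey, hle2⟩
          · have hswv : cs.length (cs.simple i * w) < cs.length (cs.simple i * v) := by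
              rcases lt_or_eq_of_le (le_of_not_gt hle2) with h | h
              · exact h
              · exfalso
                have := ht'.length_mul_right_ne (cs.simple i * v)
                rw [← hkey] at this
                exact this h
            have hsvlen : cs.length (cs.simple i * v) = cs.length v + 1 := by
              rcases cs.length_simple_mul v i with h | h
              · exact h
              · omega
            have hswlt : cs.length (cs.simple i * w) < cs.length w := by
              rcases cs.length_simple_mul w i with h | h
              · omega
              · omega
            -- reduced word for w starting with i
            obtain ⟨τ, hτred, hτ⟩ := cs.exists_reduced_word' (cs.simple i * w)
            have hπiτ : cs.wordProd (i :: τ) = w := by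
              rw [cs.wordProd_cons, ← hτ, cs.simple_mul_simple_cancel_left]
            have hv : v = t * w := by
              rw [hwt, ← mul_assoc, ht.mul_self, one_mul]
            have hlt2 : cs.length (t * w) < cs.length w := by rw [← hv]; omega
            obtain ⟨j, hj, hj2⟩ := exists_eraseIdx_left cs ht hlt2 hπiτ
            rw [← hv] at hj2
            cases j with
            | zero =>
              -- v = π τ = s i * w
              have hveq : v = cs.simple i * w := by rw [← hj2, List.eraseIdx_cons_zero, ← hτ]
              have hsv_eq : cs.simple i * v = w := by
                rw [hveq, cs.simple_mul_simple_cancel_left]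
              left
              rw [← hsv_eq]
              exact h1
            | succ k =>
              -- v = s i * π (τ.eraseIdx k)
              have herase : (i :: τ).eraseIdx (k + 1) = i :: τ.eraseIdx k := rfl
              rw [herase, cs.wordProd_cons] at hj2
              have hτn : τ.length < n := by
                have hr1 : cs.length (cs.wordProd τ) = τ.length := hτred
                have hr2 : cs.length (cs.wordProd τ) = cs.length (cs.simple i * w) := by
                  rw [← hτ]
                omega
              have hBτ := (ih τ.length hτn).2 τ hτred rfl (τ.eraseIdx k) (List.eraseIdx_sublist τ k)
              -- s i * v = π (τ.eraseIdx k) ≤ π τ = s i * w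
              have hsiv : cs.simple i * v = cs.wordProd (τ.eraseIdx k) := by
                rw [← hj2, cs.simple_mul_simple_cancel_left]
              refine Or.inr (bruhatLE_trans cs h1 ?_)
              rw [hsiv, hτ]
              exact hBτ
  · -- B
    intro ω hred hlen ω' hsub
    cases ω with
    | nil =>
      have : ω' = [] := List.sublist_nil.mp hsub
      rw [this]
      exact bruhatLE_refl cs _
    | cons a l₂ =>
      have hl₂red : cs.IsReduced l₂ := by
        have := IsReduced.drop (ω := a :: l₂) hred (j := 1)
        simpa using this
      have hlen₂ : l₂.length < n := by rw [← hlen]; simp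
      have hup : cs.length (cs.wordProd l₂) < cs.length (cs.simple a * cs.wordProd l₂) := by
        have hx : cs.length (cs.wordProd (a :: l₂)) = (a :: l₂).length := hred
        rw [cs.wordProd_cons] at hx
        have hy : cs.length (cs.wordProd l₂) = l₂.length := hl₂red
        rw [hx, hy]; simp
      have hstep : BruhatLE cs (cs.wordProd l₂) (cs.wordProd (a :: l₂)) := by
        rw [cs.wordProd_cons]
        exact step_up_left cs hup
      rcases List.sublist_cons_iff.mp hsub with h | ⟨r, rfl, h⟩
      · exact bruhatLE_trans cs ((ih l₂.length hlen₂).2 l₂ hl₂red rfl ω' h) hstep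
      · have h1 := (ih l₂.length hlen₂).2 l₂ hl₂red rfl r h
        have hM := (ih l₂.length hlen₂).1 (cs.wordProd l₂) hl₂red (cs.wordProd r) a h1
        rw [cs.wordProd_cons, cs.wordProd_cons]
        rcases hM with h2 | h2
        · exact bruhatLE_trans cs h2 (step_up_left cs hup)
        · exact h2
end chunk4
section chunk5

lemma simple_mul_le_or (u w : W) (i : B) (h : BruhatLE cs u w) :
    BruhatLE cs (cs.simple i * u) w ∨ BruhatLE cs (cs.simple i * u) (cs.simple i * w) :=
  (M_and_B cs (cs.length w)).1 w rfl u i h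

lemma subword_le {ω ω' : List B} (hred : cs.IsReduced ω) (hsub : ω' <+ ω) :
    BruhatLE cs (cs.wordProd ω') (cs.wordProd ω) :=
  (M_and_B cs ω.length).2 ω hred rfl ω' hsub

/-- Lemma G: multiplying below a descent stays below. -/
lemma lemG {u w : W} {i : B} (hw : cs.length (cs.simple i * w) < cs.length w)
    (h : BruhatLE cs u w) : BruhatLE cs (cs.simple i * u) w := by
  rcases simple_mul_le_or cs u w i h with h1 | h1
  · exact h1
  · exact bruhatLE_trans cs h1 (step_down_left cs hw)

/-- Lifting property (b). -/
lemma liftB : ∀ n : ℕ, ∀ u w : W, ∀ i : B, cs.length w = n →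
    cs.length u < cs.length (cs.simple i * u) →
    cs.length (cs.simple i * w) < cs.length w →
    BruhatLE cs u w → BruhatLE cs u (cs.simple i * w) := by
  intro n
  induction n using Nat.strong_induction_on with
  | _ n ih =>
  intro u w i hw hu hwd hle
  rcases Relation.ReflTransGen.cases_tail hle with heq | ⟨v, huv, hstep⟩
  · exfalso; rw [heq] at hwd; omega
  · obtain ⟨t, ht, hwt, hlv⟩ := hstep
    by_cases hsv : cs.length (cs.simple i * v) < cs.length v
    · have hih := ih (cs.length v) (by omega) u v i rfl hu hsv huv
      -- Step (s i * v) (s i * w)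
      have hkey : cs.simple i * w = (cs.simple i * t * (cs.simple i)⁻¹) * (cs.simple i * v) := by
        rw [hwt]; group
      have hlen1 : cs.length (cs.simple i * v) + 1 = cs.length v := by
        rcases cs.length_simple_mul v i with h | h <;> omega
      have hlen2 : cs.length (cs.simple i * w) + 1 = cs.length w := by
        rcases cs.length_simple_mul w i with h | h <;> omega
      have hstep2 : Step cs (cs.simple i * v) (cs.simple i * w) :=
        ⟨_, ht.conj (cs.simple i), hkey, by omega⟩
      exact bruhatLE_trans cs hih (Relation.ReflTransGen.single hstep2)
    · have hsv' : cs.length v < cs.length (cs.simple i * v) :=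
        lt_of_le_of_ne (le_of_not_gt hsv) (Ne.symm (cs.length_simple_mul_ne v i))
      obtain ⟨τ, hτred, hτ⟩ := cs.exists_reduced_word' (cs.simple i * w)
      have hπiτ : cs.wordProd (i :: τ) = w := by
        rw [cs.wordProd_cons, ← hτ, cs.simple_mul_simple_cancel_left]
      have hv : v = t * w := by rw [hwt, ← mul_assoc, ht.mul_self, one_mul]
      have hlt2 : cs.length (t * w) < cs.length w := by rw [← hv]; omega
      obtain ⟨j, hj, hj2⟩ := exists_eraseIdx_left cs ht hlt2 hπiτ
      rw [← hv] at hj2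
      cases j with
      | zero =>
        have hveq : v = cs.simple i * w := by rw [← hj2, List.eraseIdx_cons_zero, ← hτ]
        rw [← hveq]
        exact huv
      | succ k =>
        have herase : (i :: τ).eraseIdx (k + 1) = i :: τ.eraseIdx k := rfl
        rw [herase, cs.wordProd_cons] at hj2
        have hsiv : cs.simple i * v = cs.wordProd (τ.eraseIdx k) := by
          rw [← hj2, cs.simple_mul_simple_cancel_left]
        have hB := subword_le cs hτred (List.eraseIdx_sublist τ k)
        rw [← hsiv, ← hτ] at hB
        -- u ≤ v ≤ s i * v ≤ s i * w
        exact bruhatLE_trans cs huv (bruhatLE_trans cs (step_up_left cs hsv') hB)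

/-- Lemma G': lifting from below when going up. -/
lemma lemG' {u z : W} {i : B} (hu : cs.length u < cs.length (cs.simple i * u))
    (h : BruhatLE cs u z) : BruhatLE cs u (cs.simple i * z) := by
  by_cases hz : cs.length (cs.simple i * z) < cs.length z
  · exact liftB cs (cs.length z) u z i rfl hu hz h
  · have hz' : cs.length z < cs.length (cs.simple i * z) :=
      lt_of_le_of_ne (le_of_not_gt hz) (Ne.symm (cs.length_simple_mul_ne z i))
    exact bruhatLE_trans cs h (step_up_left cs hz')

/-- Right-hand versions via inverses. -/
lemma lemG_right {u w : W} {j : B} (hw : cs.length (w * cs.simple j) < cs.length w)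
    (h : BruhatLE cs u w) : BruhatLE cs (u * cs.simple j) w := by
  have hinv : cs.length (cs.simple j * w⁻¹) < cs.length w⁻¹ := by
    have h1 : cs.simple j * w⁻¹ = (w * cs.simple j)⁻¹ := by
      rw [mul_inv_rev, cs.inv_simple]
    rw [h1, cs.length_inv, cs.length_inv]
    exact hw
  have := lemG cs hinv (bruhatLE_inv cs h)
  have h2 : cs.simple j * u⁻¹ = (u * cs.simple j)⁻¹ := by
    rw [mul_inv_rev, cs.inv_simple]
  rw [h2] at this
  exact bruhatLE_of_bruhatLE_inv cs this

lemma lemG'_right {u z : W} {j : B} (hu : cs.length u < cs.length (u * cs.simple j))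
    (h : BruhatLE cs u z) : BruhatLE cs u (z * cs.simple j) := by
  have hinv : cs.length u⁻¹ < cs.length (cs.simple j * u⁻¹) := by
    have h1 : cs.simple j * u⁻¹ = (u * cs.simple j)⁻¹ := by
      rw [mul_inv_rev, cs.inv_simple]
    rw [h1, cs.length_inv, cs.length_inv]
    exact hu
  have := lemG' cs hinv (bruhatLE_inv cs h)
  have h2 : cs.simple j * z⁻¹ = (z * cs.simple j)⁻¹ := by
    rw [mul_inv_rev, cs.inv_simple]
  rw [h2] at this
  exact bruhatLE_of_bruhatLE_inv cs this

end chunk5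
section chunk6

lemma simple_mem_parabolic {I : Set B} {i : B} (hi : i ∈ I) :
    cs.simple i ∈ parabolic cs I :=
  Subgroup.subset_closure ⟨i, hi, rfl⟩

lemma exists_word_of_mem_parabolic {I : Set B} {x : W} (hx : x ∈ parabolic cs I) :
    ∃ ω : List B, (∀ i ∈ ω, i ∈ I) ∧ cs.wordProd ω = x := by
  induction hx using Subgroup.closure_induction with
  | mem g hg =>
    obtain ⟨i, hi, rfl⟩ := hg
    exact ⟨[i], by simpa using hi, cs.wordProd_singleton i⟩
  | one => exact ⟨[], by simp, cs.wordProd_nil⟩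
  | mul g h hg hh ihg ihh =>
    obtain ⟨ω₁, h₁, rfl⟩ := ihg
    obtain ⟨ω₂, h₂, rfl⟩ := ihh
    refine ⟨ω₁ ++ ω₂, ?_, cs.wordProd_append ω₁ ω₂⟩
    intro i hi
    rcases List.mem_append.mp hi with h | h
    · exact h₁ i h
    · exact h₂ i h
  | inv g hg ihg =>
    obtain ⟨ω, h₁, rfl⟩ := ihg
    refine ⟨ω.reverse, ?_, cs.wordProd_reverse ω⟩
    intro i hi
    exact h₁ i (List.mem_reverse.mp hi)

lemma mem_doubleCoset_self (I J : Set B) (u : W) : u ∈ doubleCoset cs I J u :=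
  ⟨1, one_mem _, 1, one_mem _, by simp⟩

lemma simple_mul_mem_doubleCoset {I J : Set B} {u v : W} {i : B} (hi : i ∈ I)
    (hv : v ∈ doubleCoset cs I J u) : cs.simple i * v ∈ doubleCoset cs I J u := by
  obtain ⟨x, hx, y, hy, rfl⟩ := hv
  exact ⟨cs.simple i * x, mul_mem (simple_mem_parabolic cs hi) hx, y, hy, by group⟩

lemma mul_simple_mem_doubleCoset {I J : Set B} {u v : W} {j : B} (hj : j ∈ J)
    (hv : v ∈ doubleCoset cs I J u) : v * cs.simple j ∈ doubleCoset cs I J u := by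
  obtain ⟨x, hx, y, hy, rfl⟩ := hv
  exact ⟨x, hx, y * cs.simple j, mul_mem hy (simple_mem_parabolic cs hj), by group⟩

lemma doubleCoset_eq_of_mem {I J : Set B} {u v : W} (hv : v ∈ doubleCoset cs I J u) :
    doubleCoset cs I J u = doubleCoset cs I J v := by
  obtain ⟨x₀, hx₀, y₀, hy₀, rfl⟩ := hv
  ext z
  constructor
  · rintro ⟨x, hx, y, hy, rfl⟩
    exact ⟨x * x₀⁻¹, mul_mem hx (inv_mem hx₀), y₀⁻¹ * y, mul_mem (inv_mem hy₀) hy, by group⟩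
  · rintro ⟨x, hx, y, hy, rfl⟩
    exact ⟨x * x₀, mul_mem hx hx₀, y₀ * y, mul_mem hy₀ hy, by group⟩

/-- Peeling up from a minimal element. -/
lemma peel_ge {I J : Set B} {m : W}
    (hI : ∀ i ∈ I, cs.length m < cs.length (cs.simple i * m))
    (hJ : ∀ j ∈ J, cs.length m < cs.length (m * cs.simple j)) :
    ∀ v ∈ doubleCoset cs I J m, BruhatLE cs m v := by
  have A0r : ∀ ωy : List B, (∀ j ∈ ωy, j ∈ J) → ∀ g : W,
      BruhatLE cs m g → BruhatLE cs m (g * cs.wordProd ωy) := by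
    intro ωy
    induction ωy with
    | nil => intro _ g hg; rw [cs.wordProd_nil, mul_one]; exact hg
    | cons a l ih =>
      intro hmem g hg
      rw [cs.wordProd_cons, ← mul_assoc]
      exact ih (fun j hj => hmem j (List.mem_cons_of_mem a hj)) (g * cs.simple a)
        (lemG'_right cs (hJ a (hmem a (List.mem_cons_self (a := a) (l := l)))) hg)
  have A0 : ∀ ωx : List B, (∀ i ∈ ωx, i ∈ I) → ∀ g : W,
      BruhatLE cs m g → BruhatLE cs m (cs.wordProd ωx * g) := by
    intro ωx
    induction ωx with
    | nil => intro _ g hg; rw [cs.wordProd_nil, one_mul]; exact hg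
    | cons a l ih =>
      intro hmem g hg
      rw [cs.wordProd_cons, mul_assoc]
      exact lemG' cs (hI a (hmem a (List.mem_cons_self (a := a) (l := l))))
        (ih (fun i hi => hmem i (List.mem_cons_of_mem a hi)) g hg)
  rintro v ⟨x, hx, y, hy, rfl⟩
  obtain ⟨ωx, hωxI, rfl⟩ := exists_word_of_mem_parabolic cs hx
  obtain ⟨ωy, hωyJ, rfl⟩ := exists_word_of_mem_parabolic cs hy
  have h1 : BruhatLE cs m (m * cs.wordProd ωy) := A0r ωy hωyJ m (bruhatLE_refl cs m)
  have h2 := A0 ωx hωxI (m * cs.wordProd ωy) h1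
  rwa [← mul_assoc] at h2

/-- Peeling down to a maximal element. -/
lemma peel_le {I J : Set B} {v : W}
    (hI : ∀ i ∈ I, cs.length (cs.simple i * v) < cs.length v)
    (hJ : ∀ j ∈ J, cs.length (v * cs.simple j) < cs.length v)
    {z : W} (hz : BruhatLE cs z v) :
    ∀ x ∈ parabolic cs I, ∀ y ∈ parabolic cs J, BruhatLE cs (x * z * y) v := by
  have C0r : ∀ ωy : List B, (∀ j ∈ ωy, j ∈ J) → ∀ g : W,
      BruhatLE cs g v → BruhatLE cs (g * cs.wordProd ωy) v := by
    intro ωy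
    induction ωy with
    | nil => intro _ g hg; rw [cs.wordProd_nil, mul_one]; exact hg
    | cons a l ih =>
      intro hmem g hg
      rw [cs.wordProd_cons, ← mul_assoc]
      exact ih (fun j hj => hmem j (List.mem_cons_of_mem a hj)) (g * cs.simple a)
        (lemG_right cs (hJ a (hmem a (List.mem_cons_self (a := a) (l := l)))) hg)
  have C0 : ∀ ωx : List B, (∀ i ∈ ωx, i ∈ I) → ∀ g : W,
      BruhatLE cs g v → BruhatLE cs (cs.wordProd ωx * g) v := by
    intro ωx
    induction ωx with
    | nil => intro _ g hg; rw [cs.wordProd_nil, one_mul]; exact hg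
    | cons a l ih =>
      intro hmem g hg
      rw [cs.wordProd_cons, mul_assoc]
      exact lemG cs (hI a (hmem a (List.mem_cons_self (a := a) (l := l))))
        (ih (fun i hi => hmem i (List.mem_cons_of_mem a hi)) g hg)
  intro x hx y hy
  obtain ⟨ωx, hωxI, rfl⟩ := exists_word_of_mem_parabolic cs hx
  obtain ⟨ωy, hωyJ, rfl⟩ := exists_word_of_mem_parabolic cs hy
  have h1 : BruhatLE cs (z * cs.wordProd ωy) v := C0r ωy hωyJ z hz
  have h2 := C0 ωx hωxI (z * cs.wordProd ωy) h1
  rwa [← mul_assoc] at h2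

end chunk6


/-- A finite double coset `W_I u W_J` has a unique minimal-length element `v₀` and a unique
maximal-length element `v₁`, and it equals the Bruhat interval `[v₀, v₁]`. -/
theorem doubleCoset_eq_interval (cs : CoxeterSystem M W) (I J : Set B) (u : W)
    (hfin : (doubleCoset cs I J u).Finite) :
    ∃ v₀ v₁ : W,
      (v₀ ∈ doubleCoset cs I J u ∧ ∀ v ∈ doubleCoset cs I J u, cs.length v₀ ≤ cs.length v) ∧
      (∀ v₀' , v₀' ∈ doubleCoset cs I J u →
        (∀ v ∈ doubleCoset cs I J u, cs.length v₀' ≤ cs.length v) → v₀' = v₀) ∧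
      (v₁ ∈ doubleCoset cs I J u ∧ ∀ v ∈ doubleCoset cs I J u, cs.length v ≤ cs.length v₁) ∧
      (∀ v₁' , v₁' ∈ doubleCoset cs I J u →
        (∀ v ∈ doubleCoset cs I J u, cs.length v ≤ cs.length v₁') → v₁' = v₁) ∧
      doubleCoset cs I J u = {v | BruhatLE cs v₀ v ∧ BruhatLE cs v v₁} := by
  have hne : (doubleCoset cs I J u).Nonempty := ⟨u, mem_doubleCoset_self cs I J u⟩
  obtain ⟨m, hmD, hmin⟩ := Set.exists_min_image _ cs.length hfin hne
  obtain ⟨v₁, hv₁D, hmax⟩ := Set.exists_max_image _ cs.length hfin hne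
  have hmI : ∀ i ∈ I, cs.length m < cs.length (cs.simple i * m) := by
    intro i hi
    have h1 := hmin _ (simple_mul_mem_doubleCoset cs hi hmD)
    have h2 := cs.length_simple_mul_ne m i
    omega
  have hmJ : ∀ j ∈ J, cs.length m < cs.length (m * cs.simple j) := by
    intro j hj
    have h1 := hmin _ (mul_simple_mem_doubleCoset cs hj hmD)
    have h2 := cs.length_mul_simple_ne m j
    omega
  have hv₁I : ∀ i ∈ I, cs.length (cs.simple i * v₁) < cs.length v₁ := by
    intro i hi
    have h1 := hmax _ (simple_mul_mem_doubleCoset cs hi hv₁D)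
    have h2 := cs.length_simple_mul_ne v₁ i
    omega
  have hv₁J : ∀ j ∈ J, cs.length (v₁ * cs.simple j) < cs.length v₁ := by
    intro j hj
    have h1 := hmax _ (mul_simple_mem_doubleCoset cs hj hv₁D)
    have h2 := cs.length_mul_simple_ne v₁ j
    omega
  have hDm : doubleCoset cs I J u = doubleCoset cs I J m := doubleCoset_eq_of_mem cs hmD
  have hlow : ∀ v ∈ doubleCoset cs I J u, BruhatLE cs m v := by
    intro v hv
    exact peel_ge cs hmI hmJ v (hDm ▸ hv)
  have hupp : ∀ v ∈ doubleCoset cs I J u, BruhatLE cs v v₁ := by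
    intro v hv
    have hv' : v ∈ doubleCoset cs I J v₁ := (doubleCoset_eq_of_mem cs hv₁D) ▸ hv
    obtain ⟨x, hx, y, hy, rfl⟩ := hv'
    exact peel_le cs hv₁I hv₁J (bruhatLE_refl cs v₁) x hx y hy
  have K4 : ∀ k : ℕ, ∀ v : W, BruhatLE cs m v → BruhatLE cs v v₁ →
      cs.length v₁ ≤ cs.length v + k → v ∈ doubleCoset cs I J u := by
    intro k
    induction k with
    | zero =>
      intro v h1 h2 h3
      have : v = v₁ := eq_of_bruhatLE_of_length_ge cs h2 (by omega)
      rw [this]; exact hv₁D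
    | succ k ih =>
      intro v h1 h2 h3
      by_cases hc1 : ∃ i ∈ I, cs.length v < cs.length (cs.simple i * v)
      · obtain ⟨i, hiI, hup⟩ := hc1
        have hsiv_le : BruhatLE cs (cs.simple i * v) v₁ := lemG cs (hv₁I i hiI) h2
        have hm_le : BruhatLE cs m (cs.simple i * v) :=
          bruhatLE_trans cs h1 (step_up_left cs hup)
        have hlen : cs.length v₁ ≤ cs.length (cs.simple i * v) + k := by
          rcases cs.length_simple_mul v i with h | h <;> omega
        have hmem := ih (cs.simple i * v) hm_le hsiv_le hlen
        have hveq : v = cs.simple i * (cs.simple i * v) :=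
          (cs.simple_mul_simple_cancel_left i).symm
        rw [hveq]
        exact simple_mul_mem_doubleCoset cs hiI hmem
      · by_cases hc2 : ∃ j ∈ J, cs.length v < cs.length (v * cs.simple j)
        · obtain ⟨j, hjJ, hup⟩ := hc2
          have h2' : BruhatLE cs (v * cs.simple j) v₁ := lemG_right cs (hv₁J j hjJ) h2
          have h1' : BruhatLE cs m (v * cs.simple j) :=
            bruhatLE_trans cs h1 (step_up_right cs hup)
          have hlen : cs.length v₁ ≤ cs.length (v * cs.simple j) + k := by
            rcases cs.length_mul_simple v j with h | h <;> omega
          have hmem := ih (v * cs.simple j) h1' h2' hlen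
          have hveq : v = (v * cs.simple j) * cs.simple j := by
            rw [mul_assoc, cs.simple_mul_simple_self, mul_one]
          rw [hveq]
          exact mul_simple_mem_doubleCoset cs hjJ hmem
        · push_neg at hc1 hc2
          have hId : ∀ i ∈ I, cs.length (cs.simple i * v) < cs.length v := fun i hi =>
            lt_of_le_of_ne (hc1 i hi) (cs.length_simple_mul_ne v i)
          have hJd : ∀ j ∈ J, cs.length (v * cs.simple j) < cs.length v := fun j hj =>
            lt_of_le_of_ne (hc2 j hj) (cs.length_mul_simple_ne v j)
          have hv₁Dm : v₁ ∈ doubleCoset cs I J m := hDm ▸ hv₁D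
          obtain ⟨x, hx, y, hy, hv₁eq⟩ := hv₁Dm
          have hle : BruhatLE cs v₁ v := by
            rw [hv₁eq]
            exact peel_le cs hId hJd h1 x hx y hy
          have : v = v₁ := eq_of_bruhatLE_of_length_ge cs h2 (length_le_of_bruhatLE cs hle)
          rw [this]; exact hv₁D
  refine ⟨m, v₁, ⟨hmD, hmin⟩, ?_, ⟨hv₁D, hmax⟩, ?_, ?_⟩
  · intro v₀' hD' hmin'
    exact (eq_of_bruhatLE_of_length_ge cs (hlow v₀' hD') (hmin' m hmD)).symm
  · intro v₁' hD' hmax'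
    exact eq_of_bruhatLE_of_length_ge cs (hupp v₁' hD') (hmax' v₁ hv₁D)
  · ext v
    constructor
    · intro hv
      exact ⟨hlow v hv, hupp v hv⟩
    · rintro ⟨h1, h2⟩
      exact K4 (cs.length v₁) v h1 h2 (by omega)


end CoxeterBruhat
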